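/- Every primitive Eisensteinian triplet (a, b, c) with b > c other than (1,1,1) is obtained exactly once in the following construction: there exist a unique finite (possibly empty) sequence α₁,…,α_k ∈ {1,2,3,4,5}, a unique v ∈ {(7,8,5)ᵗ, (13,15,7)ᵗ}, and a unique choice between (a,b,c) and its twin (a,b,b−c), such that M_{α₁}···M_{α_k} · v equals (a,b,c)ᵗ or (a,b,b−c)ᵗ, where M₁ = [[7,−6,6],[8,−7,7],[4,−4,3]], M₂ = [[7,6,−6],[8,7,−7],[4,3,−4]], M₃ = [[7,6,0],[8,7,0],[4,3,1]], M₄ = [[7,0,6],[8,0,7],[4,1,3]], M₅ = [[7,0,−6],[8,0,−7],[4,1,−4]]. -/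

import Mathlib

open Matrix

/-- A primitive Eisensteinian triplet: positive integers with
`a² = b² + c² − bc` and `gcd(a,b,c) = 1`. -/
def IsPrimitiveEisenstein (a b c : ℤ) : Prop :=
  0 < a ∧ 0 < b ∧ 0 < c ∧ a ^ 2 = b ^ 2 + c ^ 2 - b * c ∧
    Int.gcd a (Int.gcd b c) = 1

/-- The five matrices `M₁, …, M₅`. -/
def Mmat : Fin 5 → Matrix (Fin 3) (Fin 3) ℤ
  | 0 => !![7, -6, 6; 8, -7, 7; 4, -4, 3]
  | 1 => !![7, 6, -6; 8, 7, -7; 4, 3, -4]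
  | 2 => !![7, 6, 0; 8, 7, 0; 4, 3, 1]
  | 3 => !![7, 0, 6; 8, 0, 7; 4, 1, 3]
  | 4 => !![7, 0, -6; 8, 0, -7; 4, 1, -4]

namespace EForest

abbrev V := Fin 3 → ℤ

lemma v3_0 (x y z : ℤ) : ![x,y,z] 0 = x := rfl
lemma v3_1 (x y z : ℤ) : ![x,y,z] 1 = y := rfl
lemma v3_2 (x y z : ℤ) : ![x,y,z] 2 = z := rfl
lemma v3_eta (v : V) : v = ![v 0, v 1, v 2] := by funext k; fin_cases k <;> rfl
lemma v3_ext {v : V} {A B C : ℤ} (h0 : v 0 = A) (h1 : v 1 = B) (h2 : v 2 = C) :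
    v = ![A,B,C] := by rw [v3_eta v, h0, h1, h2]

lemma fin5_cases : ∀ i : Fin 5, i = 0 ∨ i = 1 ∨ i = 2 ∨ i = 3 ∨ i = 4 := by decide

lemma mv0 (v : V) : (Mmat 0).mulVec v =
    ![7*v 0 - 6*v 1 + 6*v 2, 8*v 0 - 7*v 1 + 7*v 2, 4*v 0 - 4*v 1 + 3*v 2] := by
  funext k; fin_cases k <;>
    simp [Mmat, Matrix.mulVec, dotProduct, Fin.sum_univ_three] <;> ring
lemma mv1 (v : V) : (Mmat 1).mulVec v =
    ![7*v 0 + 6*v 1 - 6*v 2, 8*v 0 + 7*v 1 - 7*v 2, 4*v 0 + 3*v 1 - 4*v 2] := by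
  funext k; fin_cases k <;>
    simp [Mmat, Matrix.mulVec, dotProduct, Fin.sum_univ_three] <;> ring
lemma mv2 (v : V) : (Mmat 2).mulVec v =
    ![7*v 0 + 6*v 1, 8*v 0 + 7*v 1, 4*v 0 + 3*v 1 + v 2] := by
  funext k; fin_cases k <;>
    simp [Mmat, Matrix.mulVec, dotProduct, Fin.sum_univ_three] <;> ring
lemma mv3 (v : V) : (Mmat 3).mulVec v =
    ![7*v 0 + 6*v 2, 8*v 0 + 7*v 2, 4*v 0 + v 1 + 3*v 2] := by
  funext k; fin_cases k <;>
    simp [Mmat, Matrix.mulVec, dotProduct, Fin.sum_univ_three] <;> ring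
lemma mv4 (v : V) : (Mmat 4).mulVec v =
    ![7*v 0 - 6*v 2, 8*v 0 - 7*v 2, 4*v 0 + v 1 - 4*v 2] := by
  funext k; fin_cases k <;>
    simp [Mmat, Matrix.mulVec, dotProduct, Fin.sum_univ_three] <;> ring

/-- Valid triples (as column vectors). -/
abbrev Valid (w : V) : Prop :=
  0 < w 0 ∧ 0 < w 2 ∧ w 2 < w 1 ∧
    (w 0) ^ 2 = (w 1) ^ 2 + (w 2) ^ 2 - w 1 * w 2 ∧
    Int.gcd (w 0) (Int.gcd (w 1) (w 2)) = 1

abbrev tw (w : V) : V := ![w 0, w 1, w 1 - w 2]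

abbrev rt (b : Bool) : V := cond b ![7,8,5] ![13,15,7]

abbrev R4 (w : V) : Prop := w = ![7,8,5] ∨ w = ![7,8,3] ∨ w = ![13,15,7] ∨ w = ![13,15,8]

abbrev Rch (l : List (Fin 5)) (b : Bool) (w : V) : Prop :=
  ((l.map Mmat).prod).mulVec (rt b) = w

lemma rch_nil (b : Bool) : Rch [] b (rt b) := by simp [Rch]
lemma rch_cons_iff {i : Fin 5} {t : List (Fin 5)} {b : Bool} {w : V} :
    Rch (i::t) b w ↔ (Mmat i).mulVec ((List.map Mmat t).prod.mulVec (rt b)) = w := by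
  rw [Rch, List.map_cons, List.prod_cons, ← Matrix.mulVec_mulVec]
lemma rch_cons {i : Fin 5} {t b u w} (h : Rch t b u) (hm : (Mmat i).mulVec u = w) :
    Rch (i::t) b w := rch_cons_iff.mpr ((congrArg _ h).trans hm)

lemma tw_tw (w : V) : tw (tw w) = w := by
  refine (v3_ext rfl rfl ?_).trans (v3_eta w).symm
  show w 1 - (w 1 - w 2) = w 2; ring

/-- divisibility of a linear combination -/
lemma dvd_lin {d x y z a : ℤ} (hx : d ∣ x) (hy : d ∣ y) (hz : d ∣ z)
    (p q r : ℤ) (h : a = p*x + q*y + r*z) : d ∣ a :=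
  h ▸ dvd_add (dvd_add (hx.mul_left p) (hy.mul_left q)) (hz.mul_left r)

lemma gcd3_one {x y z a b c : ℤ} (h : Int.gcd a (Int.gcd b c) = 1)
    (ha : ∀ d : ℤ, d ∣ x → d ∣ y → d ∣ z → d ∣ a)
    (hb : ∀ d : ℤ, d ∣ x → d ∣ y → d ∣ z → d ∣ b)
    (hc : ∀ d : ℤ, d ∣ x → d ∣ y → d ∣ z → d ∣ c) :
    Int.gcd x (Int.gcd y z) = 1 := by
  have h1 : (Int.gcd x (Int.gcd y z) : ℤ) ∣ x := Int.gcd_dvd_left _ _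
  have hyz : (Int.gcd x (Int.gcd y z) : ℤ) ∣ (Int.gcd y z : ℤ) := Int.gcd_dvd_right _ _
  have h2 : (Int.gcd x (Int.gcd y z) : ℤ) ∣ y := hyz.trans (Int.gcd_dvd_left _ _)
  have h3 : (Int.gcd x (Int.gcd y z) : ℤ) ∣ z := hyz.trans (Int.gcd_dvd_right _ _)
  have hd : (Int.gcd x (Int.gcd y z) : ℤ) ∣ (Int.gcd a (Int.gcd b c) : ℤ) :=
    Int.dvd_coe_gcd (ha _ h1 h2 h3) (Int.dvd_coe_gcd (hb _ h1 h2 h3) (hc _ h1 h2 h3))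
  rw [h] at hd
  have hpos : 0 ≤ (Int.gcd x (Int.gcd y z) : ℤ) := Int.natCast_nonneg _
  have hd1 : (Int.gcd x (Int.gcd y z) : ℤ) ∣ 1 := by exact_mod_cast hd
  have hone : (Int.gcd x (Int.gcd y z) : ℤ) = 1 := by
    rcases Int.isUnit_iff.mp (isUnit_of_dvd_one hd1) with h' | h'
    · exact h'
    · omega
  exact_mod_cast hone

section Ineq
variable {w u : V}

lemma valid_lt1 (hu : Valid u) : u 0 < u 1 := by
  obtain ⟨h0, h2, h12, hQ, -⟩ := hu
  nlinarith [mul_pos h2 (sub_pos.mpr h12), sq_nonneg (u 0 + u 1)]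

lemma valid_lt2 (hu : Valid u) : u 2 < u 0 := by
  obtain ⟨h0, h2, h12, hQ, -⟩ := hu
  nlinarith [mul_pos h2 (sub_pos.mpr h12), sq_nonneg (u 0 + u 2)]

lemma valid_lt3 (hu : Valid u) : u 1 - u 2 < u 0 := by
  obtain ⟨h0, h2, h12, hQ, -⟩ := hu
  nlinarith [mul_pos h2 (show (0:ℤ) < u 1 by linarith), sq_nonneg (u 0 + u 1 - u 2)]

lemma valid_76 (hu : Valid u) : 6 * u 1 < 7 * u 0 := by
  obtain ⟨h0, h2, h12, hQ, -⟩ := hu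
  have hp : (0:ℤ) < 7 * u 0 + 6 * u 1 := by linarith
  nlinarith [sq_nonneg (26 * u 1 - 49 * u 2), mul_pos h2 h2, hp]

lemma valid_43 (hu : Valid u) : 3 * u 1 < 4 * u 0 := by
  obtain ⟨h0, h2, h12, hQ, -⟩ := hu
  have hp : (0:ℤ) < 4 * u 0 + 3 * u 1 := by linarith
  nlinarith [sq_nonneg (7 * u 1 - 8 * u 2), mul_pos h2 h2, hp]

end Ineq

lemma tw_valid {w : V} (hw : Valid w) : Valid (tw w) := by
  obtain ⟨h0, h2, h12, hQ, hg⟩ := hw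
  refine ⟨h0, ?_, ?_, ?_, ?_⟩
  · show (0:ℤ) < w 1 - w 2; linarith
  · show w 1 - w 2 < w 1; linarith
  · show (w 0)^2 = (w 1)^2 + (w 1 - w 2)^2 - w 1 * (w 1 - w 2); linear_combination hQ
  · refine gcd3_one hg ?_ ?_ ?_
    · exact fun d dx _ _ => dvd_lin dx dx dx 1 0 0 (by simp only [tw, v3_0, v3_1, v3_2]; ring)
    · exact fun d _ dy _ => dvd_lin dy dy dy 1 0 0 (by simp only [tw, v3_0, v3_1, v3_2]; ring)
    · exact fun d _ dy dz => dvd_lin dy dz dz 1 (-1) 0 (by simp only [tw, v3_0, v3_1, v3_2]; ring)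

lemma child_valid (i : Fin 5) {u : V} (hu : Valid u) : Valid ((Mmat i).mulVec u) := by
  have hx1 := valid_lt1 hu
  have hx2 := valid_lt2 hu
  have hx3 := valid_lt3 hu
  obtain ⟨h0, h2, h12, hQ, hg⟩ := hu
  have hy : (0:ℤ) < u 1 := by linarith
  rcases fin5_cases i with rfl|rfl|rfl|rfl|rfl
  · rw [mv0]
    refine ⟨?_, ?_, ?_, ?_, ?_⟩
    · show (0:ℤ) < 7*u 0 - 6*u 1 + 6*u 2; linarith
    · show (0:ℤ) < 4*u 0 - 4*u 1 + 3*u 2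
      have hp : (0:ℤ) < 4*u 0 + 4*u 1 - 3*u 2 := by linarith
      nlinarith [mul_pos hy h2, mul_pos h2 h2, hp]
    · show 4*u 0 - 4*u 1 + 3*u 2 < 8*u 0 - 7*u 1 + 7*u 2
      have hp : (0:ℤ) < 4*u 0 + 3*u 1 - 4*u 2 := by linarith
      nlinarith [mul_pos hy h2, mul_pos hy hy, hp]
    · show (7*u 0 - 6*u 1 + 6*u 2)^2 =
        (8*u 0 - 7*u 1 + 7*u 2)^2 + (4*u 0 - 4*u 1 + 3*u 2)^2
          - (8*u 0 - 7*u 1 + 7*u 2) * (4*u 0 - 4*u 1 + 3*u 2)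
      linear_combination hQ
    · refine gcd3_one hg ?_ ?_ ?_
      · exact fun d dx dy dz => dvd_lin dx dy dz 7 (-6) 0 (by simp only [v3_0, v3_1, v3_2]; ring)
      · exact fun d dx dy dz => dvd_lin dx dy dz 4 (-3) (-1) (by simp only [v3_0, v3_1, v3_2]; ring)
      · exact fun d dx dy dz => dvd_lin dx dy dz (-4) 4 (-1) (by simp only [v3_0, v3_1, v3_2]; ring)
  · rw [mv1]
    refine ⟨?_, ?_, ?_, ?_, ?_⟩
    · show (0:ℤ) < 7*u 0 + 6*u 1 - 6*u 2; linarith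
    · show (0:ℤ) < 4*u 0 + 3*u 1 - 4*u 2; linarith
    · show 4*u 0 + 3*u 1 - 4*u 2 < 8*u 0 + 7*u 1 - 7*u 2; linarith
    · show (7*u 0 + 6*u 1 - 6*u 2)^2 =
        (8*u 0 + 7*u 1 - 7*u 2)^2 + (4*u 0 + 3*u 1 - 4*u 2)^2
          - (8*u 0 + 7*u 1 - 7*u 2) * (4*u 0 + 3*u 1 - 4*u 2)
      linear_combination hQ
    · refine gcd3_one hg ?_ ?_ ?_
      · exact fun d dx dy dz => dvd_lin dx dy dz 7 (-6) 0 (by simp only [v3_0, v3_1, v3_2]; ring)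
      · exact fun d dx dy dz => dvd_lin dx dy dz (-4) 4 (-1) (by simp only [v3_0, v3_1, v3_2]; ring)
      · exact fun d dx dy dz => dvd_lin dx dy dz 4 (-3) (-1) (by simp only [v3_0, v3_1, v3_2]; ring)
  · rw [mv2]
    refine ⟨?_, ?_, ?_, ?_, ?_⟩
    · show (0:ℤ) < 7*u 0 + 6*u 1; linarith
    · show (0:ℤ) < 4*u 0 + 3*u 1 + u 2; linarith
    · show 4*u 0 + 3*u 1 + u 2 < 8*u 0 + 7*u 1; linarith
    · show (7*u 0 + 6*u 1)^2 =
        (8*u 0 + 7*u 1)^2 + (4*u 0 + 3*u 1 + u 2)^2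
          - (8*u 0 + 7*u 1) * (4*u 0 + 3*u 1 + u 2)
      linear_combination hQ
    · refine gcd3_one hg ?_ ?_ ?_
      · exact fun d dx dy dz => dvd_lin dx dy dz 7 (-6) 0 (by simp only [v3_0, v3_1, v3_2]; ring)
      · exact fun d dx dy dz => dvd_lin dx dy dz (-8) 7 0 (by simp only [v3_0, v3_1, v3_2]; ring)
      · exact fun d dx dy dz => dvd_lin dx dy dz (-4) 3 1 (by simp only [v3_0, v3_1, v3_2]; ring)
  · rw [mv3]
    refine ⟨?_, ?_, ?_, ?_, ?_⟩
    · show (0:ℤ) < 7*u 0 + 6*u 2; linarith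
    · show (0:ℤ) < 4*u 0 + u 1 + 3*u 2; linarith
    · show 4*u 0 + u 1 + 3*u 2 < 8*u 0 + 7*u 2; linarith
    · show (7*u 0 + 6*u 2)^2 =
        (8*u 0 + 7*u 2)^2 + (4*u 0 + u 1 + 3*u 2)^2
          - (8*u 0 + 7*u 2) * (4*u 0 + u 1 + 3*u 2)
      linear_combination hQ
    · refine gcd3_one hg ?_ ?_ ?_
      · exact fun d dx dy dz => dvd_lin dx dy dz 7 (-6) 0 (by simp only [v3_0, v3_1, v3_2]; ring)
      · exact fun d dx dy dz => dvd_lin dx dy dz (-4) 3 1 (by simp only [v3_0, v3_1, v3_2]; ring)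
      · exact fun d dx dy dz => dvd_lin dx dy dz (-8) 7 0 (by simp only [v3_0, v3_1, v3_2]; ring)
  · rw [mv4]
    refine ⟨?_, ?_, ?_, ?_, ?_⟩
    · show (0:ℤ) < 7*u 0 - 6*u 2; linarith
    · show (0:ℤ) < 4*u 0 + u 1 - 4*u 2; linarith
    · show 4*u 0 + u 1 - 4*u 2 < 8*u 0 - 7*u 2
      have hp : (0:ℤ) < 4*u 0 + u 1 + 3*u 2 := by linarith
      have key : (0:ℤ) < (u 1 - u 2) * (15*u 1 - 7*u 2) :=
        mul_pos (by linarith) (by linarith)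
      nlinarith [key, hp]
    · show (7*u 0 - 6*u 2)^2 =
        (8*u 0 - 7*u 2)^2 + (4*u 0 + u 1 - 4*u 2)^2
          - (8*u 0 - 7*u 2) * (4*u 0 + u 1 - 4*u 2)
      linear_combination hQ
    · refine gcd3_one hg ?_ ?_ ?_
      · exact fun d dx dy dz => dvd_lin dx dy dz 7 (-6) 0 (by simp only [v3_0, v3_1, v3_2]; ring)
      · exact fun d dx dy dz => dvd_lin dx dy dz 4 (-4) 1 (by simp only [v3_0, v3_1, v3_2]; ring)
      · exact fun d dx dy dz => dvd_lin dx dy dz 8 (-7) 0 (by simp only [v3_0, v3_1, v3_2]; ring)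

/-- the three discriminating linear functionals -/
abbrev s1 (w : V) : ℤ := 8 * w 0 - 7 * w 1
abbrev s2 (w : V) : ℤ := 4 * w 0 - 4 * w 1 + w 2
abbrev s3 (w : V) : ℤ := 4 * w 0 - 3 * w 1 - w 2

abbrev SSigns (i : Fin 5) (w : V) : Prop :=
  ![(0 < s1 w ∧ s2 w < 0 ∧ 0 < s3 w),
    (s1 w < 0 ∧ s2 w < 0 ∧ 0 < s3 w),
    (s1 w < 0 ∧ s2 w < 0 ∧ s3 w < 0),
    (s1 w < 0 ∧ 0 < s2 w ∧ s3 w < 0),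
    (0 < s1 w ∧ 0 < s2 w ∧ s3 w < 0)] i

lemma child_signs (i : Fin 5) {u : V} (hu : Valid u) :
    SSigns i ((Mmat i).mulVec u) := by
  obtain ⟨h0, h2, h12, hQ, -⟩ := hu
  rcases fin5_cases i with rfl|rfl|rfl|rfl|rfl
  · rw [mv0]
    refine ⟨?_, ?_, ?_⟩ <;> simp only [s1, s2, s3, v3_0, v3_1, v3_2] <;> linarith
  · rw [mv1]
    refine ⟨?_, ?_, ?_⟩ <;> simp only [s1, s2, s3, v3_0, v3_1, v3_2] <;> linarith
  · rw [mv2]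
    refine ⟨?_, ?_, ?_⟩ <;> simp only [s1, s2, s3, v3_0, v3_1, v3_2] <;> linarith
  · rw [mv3]
    refine ⟨?_, ?_, ?_⟩ <;> simp only [s1, s2, s3, v3_0, v3_1, v3_2] <;> linarith
  · rw [mv4]
    refine ⟨?_, ?_, ?_⟩ <;> simp only [s1, s2, s3, v3_0, v3_1, v3_2] <;> linarith

lemma ssigns_inj {i j : Fin 5} {w : V} (hi : SSigns i w) (hj : SSigns j w) : i = j := by
  rcases fin5_cases i with rfl|rfl|rfl|rfl|rfl <;>
    rcases fin5_cases j with rfl|rfl|rfl|rfl|rfl <;>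
      first
        | rfl
        | (exfalso
           obtain ⟨a1, a2, a3⟩ := hi
           obtain ⟨b1, b2, b3⟩ := hj
           linarith)

lemma mulVec_inj (i : Fin 5) {u u' : V} (h : (Mmat i).mulVec u = (Mmat i).mulVec u') :
    u = u' := by
  rcases fin5_cases i with rfl|rfl|rfl|rfl|rfl <;>
    [rw [mv0, mv0] at h; rw [mv1, mv1] at h; rw [mv2, mv2] at h;
     rw [mv3, mv3] at h; rw [mv4, mv4] at h] <;>
    (have e0 := congrFun h 0
     have e1 := congrFun h 1
     have e2 := congrFun h 2
     simp only [v3_0, v3_1, v3_2] at e0 e1 e2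
     rw [v3_eta u']
     exact v3_ext (by omega) (by omega) (by omega))

lemma parent_unique {i j : Fin 5} {u u' : V} (hu : Valid u) (hu' : Valid u')
    (h : (Mmat i).mulVec u = (Mmat j).mulVec u') : i = j ∧ u = u' := by
  have hj := child_signs j hu'
  rw [← h] at hj
  have hij : i = j := ssigns_inj (child_signs i hu) hj
  subst hij
  exact ⟨rfl, mulVec_inj i h⟩

lemma not_R4_child (i : Fin 5) {u : V} (hu : Valid u) :
    ¬ R4 ((Mmat i).mulVec u) := by
  intro hr
  have hs := child_signs i hu
  rcases hr with h|h|h|h <;> rw [h] at hs <;>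
    rcases fin5_cases i with rfl|rfl|rfl|rfl|rfl <;>
      (obtain ⟨a1, a2, a3⟩ := hs
       simp only [s1, s2, s3, v3_0, v3_1, v3_2] at a1 a2 a3
       omega)

lemma parent_exists {w : V} (hw : Valid w) (hr : ¬ R4 w) :
    ∃ (i : Fin 5) (p : V), Valid p ∧ (Mmat i).mulVec p = w ∧ p 1 < w 1 := by
  have hab := valid_lt1 hw
  have hca := valid_lt2 hw
  have hba := valid_lt3 hw
  have h76 := valid_76 hw
  have h43 := valid_43 hw
  obtain ⟨h0, h2, h12, hQ, hg⟩ := hw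
  have hy : (0:ℤ) < w 1 := by linarith
  -- s1 ≠ 0
  have hA : ¬ (8 * w 0 - 7 * w 1 = 0) := by
    intro he
    have hcc : (w 2 - 3*(w 1 - w 0)) * (w 2 - 5*(w 1 - w 0)) = 0 := by
      linear_combination (-1 : ℤ) * hQ + (2*w 0 - 2*w 1 + w 2) * he
    have d0 : (w 1 - w 0) ∣ w 0 := ⟨7, by omega⟩
    have d1 : (w 1 - w 0) ∣ w 1 := ⟨8, by omega⟩
    rcases mul_eq_zero.mp hcc with h5 | h5
    · have d2 : (w 1 - w 0) ∣ w 2 := ⟨3, by omega⟩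
      have hd : (w 1 - w 0) ∣ ((Int.gcd (w 0) (Int.gcd (w 1) (w 2)) : ℤ)) :=
        Int.dvd_coe_gcd d0 (Int.dvd_coe_gcd d1 d2)
      rw [hg] at hd
      have hd1 : (w 1 - w 0) ∣ (1:ℤ) := by exact_mod_cast hd
      have hle := Int.le_of_dvd one_pos hd1
      exact hr (Or.inr (Or.inl (v3_ext (by omega) (by omega) (by omega))))
    · have d2 : (w 1 - w 0) ∣ w 2 := ⟨5, by omega⟩
      have hd : (w 1 - w 0) ∣ ((Int.gcd (w 0) (Int.gcd (w 1) (w 2)) : ℤ)) :=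
        Int.dvd_coe_gcd d0 (Int.dvd_coe_gcd d1 d2)
      rw [hg] at hd
      have hd1 : (w 1 - w 0) ∣ (1:ℤ) := by exact_mod_cast hd
      have hle := Int.le_of_dvd one_pos hd1
      exact hr (Or.inl (v3_ext (by omega) (by omega) (by omega)))
  -- s2 ≠ 0
  have hB : ¬ (4 * w 0 - 4 * w 1 + w 2 = 0) := by
    intro he
    have hcc : w 2 * (15 * w 2 - 8 * w 1) = 0 := by
      linear_combination (-16 : ℤ) * hQ + (4*w 0 + 4*w 1 - w 2) * he
    rcases mul_eq_zero.mp hcc with h5 | h5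
    · omega
    · have d0 : (2*w 2 - w 1) ∣ w 0 := ⟨13, by omega⟩
      have d1 : (2*w 2 - w 1) ∣ w 1 := ⟨15, by omega⟩
      have d2 : (2*w 2 - w 1) ∣ w 2 := ⟨8, by omega⟩
      have hd : (2*w 2 - w 1) ∣ ((Int.gcd (w 0) (Int.gcd (w 1) (w 2)) : ℤ)) :=
        Int.dvd_coe_gcd d0 (Int.dvd_coe_gcd d1 d2)
      rw [hg] at hd
      have hd1 : (2*w 2 - w 1) ∣ (1:ℤ) := by exact_mod_cast hd
      have hle := Int.le_of_dvd one_pos hd1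
      exact hr (Or.inr (Or.inr (Or.inr (v3_ext (by omega) (by omega) (by omega)))))
  -- s3 ≠ 0
  have hC : ¬ (4 * w 0 - 3 * w 1 - w 2 = 0) := by
    intro he
    have hcc : (w 1 - w 2) * (7 * w 1 - 15 * w 2) = 0 := by
      linear_combination (-16 : ℤ) * hQ + (4*w 0 + 3*w 1 + w 2) * he
    rcases mul_eq_zero.mp hcc with h5 | h5
    · omega
    · have d0 : (w 1 - 2*w 2) ∣ w 0 := ⟨13, by omega⟩
      have d1 : (w 1 - 2*w 2) ∣ w 1 := ⟨15, by omega⟩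
      have d2 : (w 1 - 2*w 2) ∣ w 2 := ⟨7, by omega⟩
      have hd : (w 1 - 2*w 2) ∣ ((Int.gcd (w 0) (Int.gcd (w 1) (w 2)) : ℤ)) :=
        Int.dvd_coe_gcd d0 (Int.dvd_coe_gcd d1 d2)
      rw [hg] at hd
      have hd1 : (w 1 - 2*w 2) ∣ (1:ℤ) := by exact_mod_cast hd
      have hle := Int.le_of_dvd one_pos hd1
      exact hr (Or.inr (Or.inr (Or.inl (v3_ext (by omega) (by omega) (by omega)))))
  have hp0 : (0:ℤ) < 7 * w 0 - 6 * w 1 := by linarith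
  rcases lt_trichotomy (4 * w 0 - 4 * w 1 + w 2) 0 with b2 | b2 | b2
  · rcases lt_trichotomy (4 * w 0 - 3 * w 1 - w 2) 0 with c3 | c3 | c3
    · -- pattern (−,−,−) : matrix M₃ (index 2)
      refine ⟨2, ![7*w 0 - 6*w 1, 7*w 1 - 8*w 0, 3*w 1 + w 2 - 4*w 0],
        ⟨hp0, ?_, ?_, ?_, ?_⟩, ?_, ?_⟩
      · show (0:ℤ) < 3*w 1 + w 2 - 4*w 0; linarith
      · show 3*w 1 + w 2 - 4*w 0 < 7*w 1 - 8*w 0; linarith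
      · show (7*w 0 - 6*w 1)^2 = (7*w 1 - 8*w 0)^2 + (3*w 1 + w 2 - 4*w 0)^2
            - (7*w 1 - 8*w 0) * (3*w 1 + w 2 - 4*w 0)
        linear_combination hQ
      · refine gcd3_one hg ?_ ?_ ?_
        · exact fun d dx dy dz => dvd_lin dx dy dz 7 6 0 (by simp only [v3_0, v3_1, v3_2]; ring)
        · exact fun d dx dy dz => dvd_lin dx dy dz 8 7 0 (by simp only [v3_0, v3_1, v3_2]; ring)
        · exact fun d dx dy dz => dvd_lin dx dy dz 4 3 1 (by simp only [v3_0, v3_1, v3_2]; ring)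
      · rw [mv2]
        refine (v3_ext ?_ ?_ ?_).trans (v3_eta w).symm <;>
          simp only [v3_0, v3_1, v3_2] <;> ring
      · show 7*w 1 - 8*w 0 < w 1; linarith
    · exact absurd c3 hC
    · rcases lt_trichotomy (8 * w 0 - 7 * w 1) 0 with a1 | a1 | a1
      · -- pattern (−,−,+) : matrix M₂ (index 1)
        refine ⟨1, ![7*w 0 - 6*w 1, 4*w 1 - 4*w 0 - w 2, 4*w 0 - 3*w 1 - w 2],
          ⟨hp0, ?_, ?_, ?_, ?_⟩, ?_, ?_⟩
        · show (0:ℤ) < 4*w 0 - 3*w 1 - w 2; linarith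
        · show 4*w 0 - 3*w 1 - w 2 < 4*w 1 - 4*w 0 - w 2; linarith
        · show (7*w 0 - 6*w 1)^2 = (4*w 1 - 4*w 0 - w 2)^2 + (4*w 0 - 3*w 1 - w 2)^2
              - (4*w 1 - 4*w 0 - w 2) * (4*w 0 - 3*w 1 - w 2)
          linear_combination hQ
        · refine gcd3_one hg ?_ ?_ ?_
          · exact fun d dx dy dz => dvd_lin dx dy dz 7 6 (-6) (by simp only [v3_0, v3_1, v3_2]; ring)
          · exact fun d dx dy dz => dvd_lin dx dy dz 8 7 (-7) (by simp only [v3_0, v3_1, v3_2]; ring)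
          · exact fun d dx dy dz => dvd_lin dx dy dz 4 3 (-4) (by simp only [v3_0, v3_1, v3_2]; ring)
        · rw [mv1]
          refine (v3_ext ?_ ?_ ?_).trans (v3_eta w).symm <;>
            simp only [v3_0, v3_1, v3_2] <;> ring
        · show 4*w 1 - 4*w 0 - w 2 < w 1; linarith
      · exact absurd a1 hA
      · -- pattern (+,−,+) : matrix M₁ (index 0)
        refine ⟨0, ![7*w 0 - 6*w 1, 4*w 0 - 3*w 1 - w 2, 4*w 1 - 4*w 0 - w 2],
          ⟨hp0, ?_, ?_, ?_, ?_⟩, ?_, ?_⟩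
        · show (0:ℤ) < 4*w 1 - 4*w 0 - w 2; linarith
        · show 4*w 1 - 4*w 0 - w 2 < 4*w 0 - 3*w 1 - w 2; linarith
        · show (7*w 0 - 6*w 1)^2 = (4*w 0 - 3*w 1 - w 2)^2 + (4*w 1 - 4*w 0 - w 2)^2
              - (4*w 0 - 3*w 1 - w 2) * (4*w 1 - 4*w 0 - w 2)
          linear_combination hQ
        · refine gcd3_one hg ?_ ?_ ?_
          · exact fun d dx dy dz => dvd_lin dx dy dz 7 (-6) 6 (by simp only [v3_0, v3_1, v3_2]; ring)
          · exact fun d dx dy dz => dvd_lin dx dy dz 8 (-7) 7 (by simp only [v3_0, v3_1, v3_2]; ring)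
          · exact fun d dx dy dz => dvd_lin dx dy dz 4 (-4) 3 (by simp only [v3_0, v3_1, v3_2]; ring)
        · rw [mv0]
          refine (v3_ext ?_ ?_ ?_).trans (v3_eta w).symm <;>
            simp only [v3_0, v3_1, v3_2] <;> ring
        · show 4*w 0 - 3*w 1 - w 2 < w 1; linarith
  · exact absurd b2 hB
  · rcases lt_trichotomy (4 * w 0 - 3 * w 1 - w 2) 0 with c3 | c3 | c3
    · rcases lt_trichotomy (8 * w 0 - 7 * w 1) 0 with a1 | a1 | a1
      · -- pattern (−,+,−) : matrix M₄ (index 3)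
        refine ⟨3, ![7*w 0 - 6*w 1, 3*w 1 + w 2 - 4*w 0, 7*w 1 - 8*w 0],
          ⟨hp0, ?_, ?_, ?_, ?_⟩, ?_, ?_⟩
        · show (0:ℤ) < 7*w 1 - 8*w 0; linarith
        · show 7*w 1 - 8*w 0 < 3*w 1 + w 2 - 4*w 0; linarith
        · show (7*w 0 - 6*w 1)^2 = (3*w 1 + w 2 - 4*w 0)^2 + (7*w 1 - 8*w 0)^2
              - (3*w 1 + w 2 - 4*w 0) * (7*w 1 - 8*w 0)
          linear_combination hQ
        · refine gcd3_one hg ?_ ?_ ?_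
          · exact fun d dx dy dz => dvd_lin dx dy dz 7 0 6 (by simp only [v3_0, v3_1, v3_2]; ring)
          · exact fun d dx dy dz => dvd_lin dx dy dz 8 0 7 (by simp only [v3_0, v3_1, v3_2]; ring)
          · exact fun d dx dy dz => dvd_lin dx dy dz 4 1 3 (by simp only [v3_0, v3_1, v3_2]; ring)
        · rw [mv3]
          refine (v3_ext ?_ ?_ ?_).trans (v3_eta w).symm <;>
            simp only [v3_0, v3_1, v3_2] <;> ring
        · show 3*w 1 + w 2 - 4*w 0 < w 1; linarith
      · exact absurd a1 hA
      · -- pattern (+,+,−) : matrix M₅ (index 4)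
        refine ⟨4, ![7*w 0 - 6*w 1, 4*w 0 - 4*w 1 + w 2, 8*w 0 - 7*w 1],
          ⟨hp0, ?_, ?_, ?_, ?_⟩, ?_, ?_⟩
        · show (0:ℤ) < 8*w 0 - 7*w 1; linarith
        · show 8*w 0 - 7*w 1 < 4*w 0 - 4*w 1 + w 2; linarith
        · show (7*w 0 - 6*w 1)^2 = (4*w 0 - 4*w 1 + w 2)^2 + (8*w 0 - 7*w 1)^2
              - (4*w 0 - 4*w 1 + w 2) * (8*w 0 - 7*w 1)
          linear_combination hQ
        · refine gcd3_one hg ?_ ?_ ?_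
          · exact fun d dx dy dz => dvd_lin dx dy dz 7 0 (-6) (by simp only [v3_0, v3_1, v3_2]; ring)
          · exact fun d dx dy dz => dvd_lin dx dy dz 8 0 (-7) (by simp only [v3_0, v3_1, v3_2]; ring)
          · exact fun d dx dy dz => dvd_lin dx dy dz 4 1 (-4) (by simp only [v3_0, v3_1, v3_2]; ring)
        · rw [mv4]
          refine (v3_ext ?_ ?_ ?_).trans (v3_eta w).symm <;>
            simp only [v3_0, v3_1, v3_2] <;> ring
        · show 4*w 0 - 4*w 1 + w 2 < w 1; linarith
    · exact absurd c3 hC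
    · -- impossible pattern (s2 > 0 and s3 > 0)
      exfalso
      have k1 : 8 * w 1 < 15 * w 2 := by
        nlinarith [mul_pos b2 (show (0:ℤ) < 4*w 0 + 4*w 1 - w 2 by linarith), h2, hQ]
      have k2 : 15 * w 2 < 7 * w 1 := by
        nlinarith [mul_pos c3 (show (0:ℤ) < 4*w 0 + 3*w 1 + w 2 by linarith),
          sub_pos.mpr h12, hQ]
      linarith

lemma valid_rt (b : Bool) : Valid (rt b) := by
  cases b <;> exact ⟨by norm_num, by norm_num [v3_2], by norm_num [v3_2], by norm_num [v3_2], by norm_num [v3_2]⟩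

lemma rch_valid : ∀ (l : List (Fin 5)) (b : Bool) (w : V), Rch l b w → Valid w := by
  intro l
  induction l with
  | nil =>
    intro b w h
    have : rt b = w := by simpa [Rch] using h
    exact this ▸ valid_rt b
  | cons i t ih =>
    intro b w h
    rw [rch_cons_iff] at h
    exact h ▸ child_valid i (ih b _ rfl)

-- twin conjugation : tw ∘ M_i = M_{σ i} ∘ tw
lemma tw_conj0 (u : V) : tw ((Mmat 0).mulVec u) = (Mmat 4).mulVec (tw u) := by
  rw [mv0, mv4]
  refine v3_ext ?_ ?_ ?_ <;> simp only [tw, v3_0, v3_1, v3_2] <;> ring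
lemma tw_conj1 (u : V) : tw ((Mmat 1).mulVec u) = (Mmat 3).mulVec (tw u) := by
  rw [mv1, mv3]
  refine v3_ext ?_ ?_ ?_ <;> simp only [tw, v3_0, v3_1, v3_2] <;> ring
lemma tw_conj2 (u : V) : tw ((Mmat 2).mulVec u) = (Mmat 2).mulVec (tw u) := by
  rw [mv2, mv2]
  refine v3_ext ?_ ?_ ?_ <;> simp only [tw, v3_0, v3_1, v3_2] <;> ring
lemma tw_conj3 (u : V) : tw ((Mmat 3).mulVec u) = (Mmat 1).mulVec (tw u) := by
  rw [mv3, mv1]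
  refine v3_ext ?_ ?_ ?_ <;> simp only [tw, v3_0, v3_1, v3_2] <;> ring
lemma tw_conj4 (u : V) : tw ((Mmat 4).mulVec u) = (Mmat 0).mulVec (tw u) := by
  rw [mv4, mv0]
  refine v3_ext ?_ ?_ ?_ <;> simp only [tw, v3_0, v3_1, v3_2] <;> ring

lemma exists_reach : ∀ (n : ℕ) (w : V), Valid w → (w 1).toNat ≤ n →
    (∃ l b, Rch l b w) ∨ (∃ l b, Rch l b (tw w)) := by
  intro n
  induction n with
  | zero =>
    intro w hw hn
    obtain ⟨-, h2, h12, -, -⟩ := hw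
    omega
  | succ n ih =>
    intro w hw hn
    by_cases hr : R4 w
    · rcases hr with h|h|h|h
      · exact Or.inl ⟨[], true, by rw [h]; exact rch_nil true⟩
      · refine Or.inr ⟨[], true, ?_⟩
        have : tw w = rt true := by rw [h]; decide
        rw [this]; exact rch_nil true
      · exact Or.inl ⟨[], false, by rw [h]; exact rch_nil false⟩
      · refine Or.inr ⟨[], false, ?_⟩
        have : tw w = rt false := by rw [h]; decide
        rw [this]; exact rch_nil false
    · obtain ⟨i, p, hp, hmap, hlt⟩ := parent_exists hw hr
      have hp1 : 0 < p 1 := by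
        obtain ⟨-, a2, a12, -, -⟩ := hp; linarith
      have hn' : (p 1).toNat ≤ n := by omega
      rcases ih p hp hn' with ⟨l, b1, hl⟩ | ⟨l, b1, hl⟩
      · exact Or.inl ⟨i :: l, b1, rch_cons hl hmap⟩
      · refine Or.inr ?_
        rcases fin5_cases i with rfl|rfl|rfl|rfl|rfl
        · exact ⟨4 :: l, b1, rch_cons hl (by rw [← hmap]; exact (tw_conj0 p).symm)⟩
        · exact ⟨3 :: l, b1, rch_cons hl (by rw [← hmap]; exact (tw_conj1 p).symm)⟩
        · exact ⟨2 :: l, b1, rch_cons hl (by rw [← hmap]; exact (tw_conj2 p).symm)⟩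
        · exact ⟨1 :: l, b1, rch_cons hl (by rw [← hmap]; exact (tw_conj3 p).symm)⟩
        · exact ⟨0 :: l, b1, rch_cons hl (by rw [← hmap]; exact (tw_conj4 p).symm)⟩

lemma R4_rt (b : Bool) : R4 (rt b) := by cases b <;> [exact Or.inr (Or.inr (Or.inl rfl)); exact Or.inl rfl]

lemma R4_tw_rt (b : Bool) : R4 (tw (rt b)) := by cases b <;> decide

lemma unique_path : ∀ (l l' : List (Fin 5)) (b b' : Bool) (w : V),
    Rch l b w → Rch l' b' w → l = l' ∧ b = b' := by
  intro l
  induction l with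
  | nil =>
    intro l' b b' w h h'
    have hw : rt b = w := by simpa [Rch] using h
    cases l' with
    | nil =>
      have hw' : rt b' = w := by simpa [Rch] using h'
      have : rt b = rt b' := hw.trans hw'.symm
      cases b <;> cases b' <;> first | exact ⟨rfl, rfl⟩ | exact absurd this (by decide)
    | cons j t' =>
      rw [rch_cons_iff] at h'
      have hv := rch_valid t' b' _ rfl
      exact absurd (h' ▸ (hw ▸ R4_rt b)) (not_R4_child j hv)
  | cons i t ih =>
    intro l' b b' w h h'
    rw [rch_cons_iff] at h
    have hv := rch_valid t b _ rfl
    cases l' with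
    | nil =>
      have hw' : rt b' = w := by simpa [Rch] using h'
      exact absurd (h ▸ (hw' ▸ R4_rt b')) (not_R4_child i hv)
    | cons j t' =>
      rw [rch_cons_iff] at h'
      have hv' := rch_valid t' b' _ rfl
      obtain ⟨hij, huu⟩ := parent_unique hv hv' (h.trans h'.symm)
      obtain ⟨ht, hb⟩ := ih t' b b' _ (huu ▸ rfl) rfl
      exact ⟨by rw [hij, ht], hb⟩

lemma no_twin : ∀ (l l' : List (Fin 5)) (b b' : Bool) (w : V),
    Rch l b w → Rch l' b' (tw w) → False := by
  intro l
  induction l with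
  | nil =>
    intro l' b b' w h h'
    have hw : rt b = w := by simpa [Rch] using h
    cases l' with
    | nil =>
      have hw' : rt b' = tw w := by simpa [Rch] using h'
      rw [← hw] at hw'
      revert hw'; cases b <;> cases b' <;> decide
    | cons j t' =>
      rw [rch_cons_iff] at h'
      have hv := rch_valid t' b' _ rfl
      exact absurd (h' ▸ (hw ▸ R4_tw_rt b)) (not_R4_child j hv)
  | cons i t ih =>
    intro l' b b' w h h'
    rw [rch_cons_iff] at h
    have hv := rch_valid t b _ rfl
    cases l' with
    | nil =>
      have hw' : rt b' = tw w := by simpa [Rch] using h'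
      have hwr : w = tw (rt b') := by rw [hw', tw_tw]
      exact absurd (h ▸ hwr ▸ R4_tw_rt b') (not_R4_child i hv)
    | cons j t' =>
      rw [rch_cons_iff] at h'
      have hv' := rch_valid t' b' _ rfl
      set u := (List.map Mmat t).prod.mulVec (rt b) with hu
      set u' := (List.map Mmat t').prod.mulVec (rt b') with hu'
      -- (Mmat i) u = w, (Mmat j) u' = tw w  ⇒  (Mmat i) u = tw ((Mmat j) u')
      have e : (Mmat i).mulVec u = tw ((Mmat j).mulVec u') := by
        rw [h', h, tw_tw]
      rcases fin5_cases j with rfl|rfl|rfl|rfl|rfl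
      · rw [tw_conj0] at e
        obtain ⟨-, huu⟩ := parent_unique hv (tw_valid hv') e
        exact ih t' b b' u rfl (by rw [huu, tw_tw])
      · rw [tw_conj1] at e
        obtain ⟨-, huu⟩ := parent_unique hv (tw_valid hv') e
        exact ih t' b b' u rfl (by rw [huu, tw_tw])
      · rw [tw_conj2] at e
        obtain ⟨-, huu⟩ := parent_unique hv (tw_valid hv') e
        exact ih t' b b' u rfl (by rw [huu, tw_tw])
      · rw [tw_conj3] at e
        obtain ⟨-, huu⟩ := parent_unique hv (tw_valid hv') e
        exact ih t' b b' u rfl (by rw [huu, tw_tw])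
      · rw [tw_conj4] at e
        obtain ⟨-, huu⟩ := parent_unique hv (tw_valid hv') e
        exact ih t' b b' u rfl (by rw [huu, tw_tw])

end EForest

/-- main theorem: every primitive Eisensteinian triplet with
`b > c` other than `(1,1,1)` is obtained exactly once: there is a unique choice
of a word `α₁,…,α_k ∈ {1,…,5}`, of a root `v ∈ {(7,8,5)ᵗ, (13,15,7)ᵗ}`, and of
`(a,b,c)` versus its twin `(a,b,b−c)`, with `M_{α₁} ⋯ M_{α_k} · v` equal to the
chosen triple. -/
theorem eisenstein_forest_main (a b c : ℤ) (h : IsPrimitiveEisenstein a b c)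
    (hbc : b > c) (hne : (a, b, c) ≠ (1, 1, 1)) :
    ∃! t : List (Fin 5) × Bool × Bool,
      (t.1.map Mmat).prod.mulVec (cond t.2.1 ![7, 8, 5] ![13, 15, 7]) =
        cond t.2.2 ![a, b, c] ![a, b, b - c] := by
  clear hne
  obtain ⟨ha0, hb0, hc0, hQ, hg⟩ := h
  have hw : EForest.Valid ![a,b,c] := ⟨ha0, hc0, hbc, hQ, hg⟩
  have htw : EForest.tw ![a,b,c] = ![a,b,b-c] := rfl
  rcases EForest.exists_reach b.toNat ![a,b,c] hw (Nat.le_refl _) with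
    ⟨l, b1, hl⟩ | ⟨l, b1, hl⟩
  · refine ⟨(l, b1, true), hl, ?_⟩
    rintro ⟨l', b1', b2'⟩ hy
    cases b2'
    · exfalso
      exact EForest.no_twin l l' b1 b1' ![a,b,c] hl (by rw [htw]; exact hy)
    · obtain ⟨hl', hb'⟩ := EForest.unique_path l' l b1' b1 ![a,b,c] hy hl
      rw [hl', hb']
  · have hl2 : EForest.Rch l b1 ![a,b,b-c] := by rw [← htw]; exact hl
    refine ⟨(l, b1, false), hl2, ?_⟩
    rintro ⟨l', b1', b2'⟩ hy
    cases b2'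
    · obtain ⟨hl', hb'⟩ := EForest.unique_path l' l b1' b1 ![a,b,b-c] hy hl2
      rw [hl', hb']
    · exfalso
      exact EForest.no_twin l' l b1' b1 ![a,b,c] hy hl
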